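/- Scope extension holds in the parking cost-function algebra: if x ∉ supp(ψ), then for all X ⊆ N, ((x)(φ ⊕ ψ))(X) = (((x)φ) ⊕ ψ)(X), where (φ ⊕ ψ)(X) = min over partitions X = X₁ ⊎ X₂ with X₁ ⊆ supp(φ), X₂ ⊆ supp(ψ) of φ(X₁)+ψ(X₂), ((x)φ)(X) = φ(X ∪ {x}), supp(φ⊕ψ) = (supp(φ) ∪ supp(ψ)), and supp((x)φ) = supp(φ)∖{x}. -/

import Mathlib

/-- A parking cost function: a map on finite sets of names together with a
designated finite support set. Compactness (f X = f (X ∩ S)) is stated as a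
hypothesis where needed. -/
structure PCost where
  S : Finset ℕ
  f : Finset ℕ → EReal

namespace PCost

/-- Compactness: the function is determined by its support. -/
def Compact (φ : PCost) : Prop := ∀ X, φ.f X = φ.f (X ∩ φ.S)

/-- Parking parallel composition: (φ ⊕ ψ)(X) is the minimum of φ(X₁) + ψ(X₂)
over partitions X = X₁ ⊎ X₂ with X₁ ⊆ S_φ and X₂ ⊆ S_ψ (∞ if none exists);
its support is S_φ ∪ S_ψ. -/
noncomputable def par (φ ψ : PCost) : PCost where
  S := φ.S ∪ ψ.S
  f := fun X =>
    ⨅ p : {p : Finset ℕ × Finset ℕ //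
            p.1 ∪ p.2 = X ∧ Disjoint p.1 p.2 ∧ p.1 ⊆ φ.S ∧ p.2 ⊆ ψ.S},
      φ.f p.1.1 + ψ.f p.1.2

/-- The interpretation of nil: the constantly-zero cost function, empty support. -/
noncomputable def zero : PCost := ⟨∅, fun _ => 0⟩

/-- Parking restriction: ((x)φ)(X) = φ(X ∪ {x}), with support S_φ ∖ {x}. -/
def res (x : ℕ) (φ : PCost) : PCost := ⟨φ.S.erase x, fun X => φ.f (insert x X)⟩

end PCost

/-- scope extension holds in the parking cost-function algebra:
if x ∉ supp(ψ) (with x ∈ supp(φ) and X ⊆ (supp(φ) ∪ supp(ψ)) ∖ {x}), then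
((x)(φ ⊕ ψ))(X) = (((x)φ) ⊕ ψ)(X). -/
theorem parking_scopeExt (φ ψ : PCost) (hφ : φ.Compact) (hψ : ψ.Compact)
    (x : ℕ) (hxψ : x ∉ ψ.S) (hxφ : x ∈ φ.S)
    (X : Finset ℕ) (hX : X ⊆ (φ.S ∪ ψ.S).erase x) :
    (PCost.res x (φ.par ψ)).f X = ((PCost.res x φ).par ψ).f X := by
  have hxX : x ∉ X := fun h => (Finset.mem_erase.mp (hX h)).1 rfl
  simp only [PCost.res, PCost.par]
  apply le_antisymm
  · apply le_iInf
    rintro ⟨⟨q1, q2⟩, hu, hd, h1, h2⟩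
    have hxq2 : x ∉ q2 := fun h => hxψ (h2 h)
    refine iInf_le_of_le ⟨⟨insert x q1, q2⟩, ?_, ?_, ?_, h2⟩ ?_
    · simp [Finset.insert_union, hu]
    · exact Finset.disjoint_insert_left.mpr ⟨hxq2, hd⟩
    · exact Finset.insert_subset hxφ (fun a ha => Finset.mem_of_mem_erase (h1 ha))
    · rfl
  · apply le_iInf
    rintro ⟨⟨p1, p2⟩, hu, hd, h1, h2⟩
    have hxp2 : x ∉ p2 := fun h => hxψ (h2 h)
    have hxp1 : x ∈ p1 := by
      have : x ∈ p1 ∪ p2 := hu ▸ Finset.mem_insert_self x X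
      simpa [hxp2] using this
    refine iInf_le_of_le ⟨⟨p1.erase x, p2⟩, ?_, ?_, ?_, h2⟩ ?_
    · have h : (p1 ∪ p2).erase x = X := by
        rw [hu]; exact Finset.erase_insert hxX
      rw [← h, Finset.erase_union_distrib, Finset.erase_eq_of_notMem hxp2]
    · exact hd.mono (Finset.erase_subset x p1) le_rfl
    · exact Finset.erase_subset_erase x h1
    · simp [Finset.insert_erase hxp1]
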